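/- Let $\mu \in (0,1)$, $\widetilde H_0 > 0$, $M_f \ge 0$, and define $H_k = \widetilde H_0 k^{1-\mu}$ for $k \ge 1$ and $\zeta_k = -\frac{H_k}{2}d_k^2 + \frac{M_f}{\mu+1}d_k^{\mu+1}$ where $d_k \ge 0$ satisfies: $\zeta_k > 0$ implies $d_k \le \frac{1}{k}\left(\frac{2M_f}{(1+\mu)\widetilde H_0}\right)^{1/(1-\mu)}$. Then for every integer $t \ge 2$, $\frac{1}{t(t+1)}\sum_{k=1}^{t-1}(k+1)(k+2)\zeta_k \le \frac{\omega_0}{t^{\mu}}$, where $\omega_0 = 4\widetilde H_0\left(\frac{2M_f}{(1+\mu)\widetilde H_0}\right)^{2/(1-\mu)}$. -/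

import Mathlib

set_option maxHeartbeats 1000000


/-- Summation estimate (inequality (4.13) of the paper): with `H_k = H̃₀ k^{1-μ}` and
`ζ_k = -(H_k/2)d_k² + (M_f/(μ+1))d_k^{μ+1}`, where `ζ_k > 0` forces
`d_k ≤ (1/k)(2M_f/((1+μ)H̃₀))^{1/(1-μ)}`, one has for all `t ≥ 2`:
`(1/(t(t+1))) ∑_{k=1}^{t-1} (k+1)(k+2) ζ_k ≤ ω₀ / t^μ` with
`ω₀ = 4H̃₀ (2M_f/((1+μ)H̃₀))^{2/(1-μ)}`. -/
theorem stmt_16 (μ H₀ Mf : ℝ) (hμ : μ ∈ Set.Ioo (0 : ℝ) 1) (hH₀ : 0 < H₀) (hMf : 0 ≤ Mf)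
    (d : ℕ → ℝ) (hd : ∀ k : ℕ, 1 ≤ k → 0 ≤ d k)
    (H ζ : ℕ → ℝ)
    (hH : ∀ k : ℕ, 1 ≤ k → H k = H₀ * (k : ℝ) ^ (1 - μ))
    (hζ : ∀ k : ℕ, 1 ≤ k → ζ k = -(H k / 2) * d k ^ 2 + (Mf / (μ + 1)) * d k ^ (μ + 1))
    (hdk : ∀ k : ℕ, 1 ≤ k → 0 < ζ k →
      d k ≤ (1 / (k : ℝ)) * (2 * Mf / ((1 + μ) * H₀)) ^ (1 / (1 - μ)))
    (ω₀ : ℝ) (hω₀ : ω₀ = 4 * H₀ * (2 * Mf / ((1 + μ) * H₀)) ^ (2 / (1 - μ))) :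
    ∀ t : ℕ, 2 ≤ t →
      (1 / ((t : ℝ) * ((t : ℝ) + 1))) *
          ∑ k ∈ Finset.Icc 1 (t - 1), ((k : ℝ) + 1) * ((k : ℝ) + 2) * ζ k ≤
        ω₀ / (t : ℝ) ^ μ := by
  obtain ⟨hμ0, hμ1⟩ := hμ
  set b : ℝ := 2 * Mf / ((1 + μ) * H₀) with hb
  set c : ℝ := b ^ (1 / (1 - μ)) with hc
  have hb0 : 0 ≤ b := by positivity
  have hc0 : 0 ≤ c := Real.rpow_nonneg hb0 _
  have h1μ : (0:ℝ) < 1 - μ := by linarith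
  -- key per-term bound
  have key : ∀ k : ℕ, 1 ≤ k →
      ((k : ℝ) + 1) * ((k : ℝ) + 2) * ζ k ≤ 3 * H₀ * c ^ 2 * (k : ℝ) ^ (1 - μ) := by
    intro k hk
    have hk1 : (1:ℝ) ≤ (k:ℝ) := by exact_mod_cast hk
    have hkpos : (0:ℝ) < (k:ℝ) := by linarith
    have hRHS0 : 0 ≤ 3 * H₀ * c ^ 2 * (k : ℝ) ^ (1 - μ) := by
      have := Real.rpow_nonneg hkpos.le (1 - μ)
      positivity
    rcases le_or_gt (ζ k) 0 with hz | hz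
    · have : ((k : ℝ) + 1) * ((k : ℝ) + 2) * ζ k ≤ 0 := by
        apply mul_nonpos_of_nonneg_of_nonpos _ hz
        nlinarith
      linarith
    · -- ζ k > 0 case
      have hd0 : 0 ≤ d k := hd k hk
      have hdpow : (0:ℝ) ≤ d k ^ (μ + 1) := Real.rpow_nonneg hd0 _
      have hHk : H k = H₀ * (k : ℝ) ^ (1 - μ) := hH k hk
      have hHk0 : 0 ≤ H k := by
        rw [hHk]; exact mul_nonneg hH₀.le (Real.rpow_nonneg hkpos.le _)
      have hzeq := hζ k hk
      have hMfpos : 0 < Mf := by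
        by_contra h
        push_neg at h
        have hMf0 : Mf = 0 := le_antisymm h hMf
        rw [hzeq, hMf0] at hz
        norm_num at hz
        nlinarith [mul_nonneg hHk0 (sq_nonneg (d k))]
      have hcpos : 0 < c := Real.rpow_pos_of_pos (by positivity) _
      have hdle : d k ≤ c / k := by
        have := hdk k hk hz
        rw [one_div, inv_mul_eq_div] at this
        exact this
      -- ζ k ≤ (Mf/(μ+1)) d^{μ+1}
      have hz1 : ζ k ≤ (Mf / (μ + 1)) * d k ^ (μ + 1) := by
        rw [hzeq]; nlinarith [sq_nonneg (d k)]
      -- d^{μ+1} ≤ c^{μ+1}/k^{μ+1}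
      have hz2 : d k ^ (μ + 1) ≤ c ^ (μ + 1) / (k:ℝ) ^ (μ + 1) := by
        have := Real.rpow_le_rpow hd0 hdle (by linarith : (0:ℝ) ≤ μ + 1)
        rwa [Real.div_rpow hc0 hkpos.le] at this
      -- Mf/(μ+1) = (H₀/2) * c^{1-μ}
      have hcb : c ^ (1 - μ) = b := by
        rw [hc, ← Real.rpow_mul hb0, one_div_mul_cancel (ne_of_gt h1μ), Real.rpow_one]
      have hμ1' : (μ:ℝ) + 1 ≠ 0 := by positivity
      have hcoef : Mf / (μ + 1) = H₀ / 2 * c ^ (1 - μ) := by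
        rw [hcb, hb]
        field_simp
        ring
      -- c^{1-μ} * c^{μ+1} = c^2
      have hcc : c ^ (1 - μ) * c ^ (μ + 1) = c ^ 2 := by
        rw [← Real.rpow_add hcpos, show (1 - μ) + (μ + 1) = (2:ℝ) by ring,
          show (2:ℝ) = ((2:ℕ):ℝ) by norm_num, Real.rpow_natCast]
      have hz3 : ζ k ≤ (H₀ / 2) * c ^ 2 / (k:ℝ) ^ (μ + 1) := by
        calc ζ k ≤ (Mf / (μ + 1)) * d k ^ (μ + 1) := hz1
          _ ≤ (Mf / (μ + 1)) * (c ^ (μ + 1) / (k:ℝ) ^ (μ + 1)) := by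
              apply mul_le_mul_of_nonneg_left hz2
              positivity
          _ = (H₀ / 2) * c ^ 2 / (k:ℝ) ^ (μ + 1) := by
              rw [hcoef, ← hcc]
              ring
      -- (k+1)(k+2) ≤ 6k^2 and k^2 / k^{μ+1} = k^{1-μ}
      have h6 : ((k : ℝ) + 1) * ((k : ℝ) + 2) ≤ 6 * (k:ℝ) ^ 2 := by nlinarith
      have hB0 : 0 ≤ (H₀ / 2) * c ^ 2 / (k:ℝ) ^ (μ + 1) := by
        have := Real.rpow_pos_of_pos hkpos (μ + 1)
        positivity
      have hkk : (k:ℝ) ^ 2 / (k:ℝ) ^ (μ + 1) = (k:ℝ) ^ (1 - μ) := by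
        rw [show ((k:ℝ)) ^ (2:ℕ) = (k:ℝ) ^ ((2:ℕ):ℝ) from (Real.rpow_natCast _ 2).symm,
          ← Real.rpow_sub hkpos]
        norm_num
        ring_nf
      calc ((k : ℝ) + 1) * ((k : ℝ) + 2) * ζ k
          ≤ ((k : ℝ) + 1) * ((k : ℝ) + 2) * ((H₀ / 2) * c ^ 2 / (k:ℝ) ^ (μ + 1)) := by
            apply mul_le_mul_of_nonneg_left hz3
            nlinarith
        _ ≤ 6 * (k:ℝ) ^ 2 * ((H₀ / 2) * c ^ 2 / (k:ℝ) ^ (μ + 1)) :=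
            mul_le_mul_of_nonneg_right h6 hB0
        _ = 3 * H₀ * c ^ 2 * ((k:ℝ) ^ 2 / (k:ℝ) ^ (μ + 1)) := by ring
        _ = 3 * H₀ * c ^ 2 * (k : ℝ) ^ (1 - μ) := by rw [hkk]
  intro t ht
  have ht1 : (1:ℝ) ≤ (t:ℝ) := by exact_mod_cast Nat.one_le_of_lt ht
  have ht2 : (2:ℝ) ≤ (t:ℝ) := by exact_mod_cast ht
  have htpos : (0:ℝ) < (t:ℝ) := by linarith
  have htμ : (0:ℝ) < (t:ℝ) ^ μ := Real.rpow_pos_of_pos htpos μ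
  have htν : (0:ℝ) ≤ (t:ℝ) ^ (1 - μ) := Real.rpow_nonneg htpos.le _
  -- bound the sum
  have hsum : ∑ k ∈ Finset.Icc 1 (t - 1), ((k : ℝ) + 1) * ((k : ℝ) + 2) * ζ k ≤
      ((t:ℝ) - 1) * (3 * H₀ * c ^ 2 * (t:ℝ) ^ (1 - μ)) := by
    calc ∑ k ∈ Finset.Icc 1 (t - 1), ((k : ℝ) + 1) * ((k : ℝ) + 2) * ζ k
        ≤ ∑ k ∈ Finset.Icc 1 (t - 1), 3 * H₀ * c ^ 2 * (t:ℝ) ^ (1 - μ) := by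
          apply Finset.sum_le_sum
          intro k hkmem
          rw [Finset.mem_Icc] at hkmem
          obtain ⟨hk1, hk2⟩ := hkmem
          refine (key k hk1).trans ?_
          apply mul_le_mul_of_nonneg_left _ (by positivity)
          apply Real.rpow_le_rpow (by positivity) _ (by linarith)
          have : (k:ℝ) ≤ ((t-1 : ℕ):ℝ) := by exact_mod_cast hk2
          have h' : ((t-1 : ℕ):ℝ) ≤ (t:ℝ) := by
            exact_mod_cast Nat.sub_le t 1
          linarith
      _ = ((t:ℝ) - 1) * (3 * H₀ * c ^ 2 * (t:ℝ) ^ (1 - μ)) := by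
          rw [Finset.sum_const, Nat.card_Icc, Nat.add_sub_cancel, nsmul_eq_mul]
          have h1 : 1 ≤ t := Nat.one_le_of_lt ht
          rw [Nat.cast_sub h1]
          norm_num
  have hmul : (1 / ((t : ℝ) * ((t : ℝ) + 1))) *
      ∑ k ∈ Finset.Icc 1 (t - 1), ((k : ℝ) + 1) * ((k : ℝ) + 2) * ζ k ≤
      (1 / ((t : ℝ) * ((t : ℝ) + 1))) * (((t:ℝ) - 1) * (3 * H₀ * c ^ 2 * (t:ℝ) ^ (1 - μ))) :=
    mul_le_mul_of_nonneg_left hsum (by positivity)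
  refine hmul.trans ?_
  -- ω₀ = 4 H₀ c²
  have hω : ω₀ = 4 * H₀ * c ^ 2 := by
    rw [hω₀, hc, ← Real.rpow_natCast (b ^ (1 / (1-μ))) 2, ← Real.rpow_mul hb0,
      show (1 / (1 - μ) * ((2:ℕ):ℝ)) = 2 / (1 - μ) by push_cast; ring]
  rw [hω]
  -- t^{1-μ} = t / t^μ
  have htsplit : (t:ℝ) ^ (1 - μ) = (t:ℝ) / (t:ℝ) ^ μ := by
    rw [Real.rpow_sub htpos, Real.rpow_one]
  rw [htsplit]
  have hc2 : 0 ≤ H₀ * c ^ 2 := by positivity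
  have hfrac : (1 / ((t : ℝ) * ((t : ℝ) + 1))) *
      (((t:ℝ) - 1) * (3 * H₀ * c ^ 2 * ((t:ℝ) / (t:ℝ) ^ μ))) =
      (3 * (H₀ * c ^ 2) * ((t:ℝ) - 1) * (t:ℝ)) / (((t:ℝ) * ((t:ℝ) + 1)) * (t:ℝ) ^ μ) := by
    field_simp
  rw [hfrac, div_le_div_iff₀ (by positivity) htμ]
  have hq : 3 * (((t:ℝ) - 1) * (t:ℝ)) ≤ 4 * ((t:ℝ) * ((t:ℝ) + 1)) := by nlinarith
  nlinarith [mul_nonneg (mul_nonneg hc2 htμ.le)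
    (by nlinarith : (0:ℝ) ≤ 4 * ((t:ℝ) * ((t:ℝ) + 1)) - 3 * (((t:ℝ) - 1) * (t:ℝ)))]
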